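/- arXiv:1809.09573 — 5 statements merged into one kernel-verified Lean document; each statement's English description precedes it below -/
import Mathlib

section
/- Let f : ℝⁿ → ℝ be twice continuously differentiable and let x_opt be a global minimizer of f. Suppose there are constants 0 < α ≤ β such that α·Iₙ ⪯ ∇²f(x) ⪯ β·Iₙ for every x in the ball B_ζ(x_opt) = {x : ‖x − x_opt‖₂ ≤ ζ}, ζ > 0. Then the gradient descent iterates x_{t+1} = x_t − (1/β)·∇f(x_t), started from any x₀ ∈ B_ζ(x_opt), satisfy ‖x_t − x_opt‖₂ ≤ (1 − α/β)ᵗ · ‖x₀ − x_opt‖₂ for all t ≥ 0 (in particular all iterates remain in B_ζ(x_opt)). -/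
open RealInnerProductSpace

lemma aux_psd_norm_le {E : Type*} [NormedAddCommGroup E] [InnerProductSpace ℝ E]
    (A : E →L[ℝ] E) (c : ℝ) (hc : 0 ≤ c)
    (hsym : ∀ v w : E, ⟪A v, w⟫ = ⟪A w, v⟫)
    (h0 : ∀ v : E, (0:ℝ) ≤ ⟪A v, v⟫)
    (hC : ∀ v : E, ⟪A v, v⟫ ≤ c * ‖v‖ ^ 2) :
    ∀ v, ‖A v‖ ≤ c * ‖v‖ := by
  have hCS : ∀ v w : E, ⟪A v, w⟫ ^ 2 ≤ ⟪A v, v⟫ * ⟪A w, w⟫ := by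
    intro v w
    have hq : ∀ t : ℝ, 0 ≤ ⟪A w, w⟫ * t ^ 2 + (2 * ⟪A v, w⟫) * t + ⟪A v, v⟫ := by
      intro t
      have h := h0 (v + t • w)
      have hexp : ⟪A (v + t • w), v + t • w⟫
          = ⟪A w, w⟫ * t ^ 2 + (2 * ⟪A v, w⟫) * t + ⟪A v, v⟫ := by
        rw [map_add, map_smul]
        simp only [inner_add_left, inner_add_right, inner_smul_left, inner_smul_right,
          RCLike.ofReal_real_eq_id, id, ContinuousLinearMap.coe_smul', Pi.smul_apply]
        have h1 : ⟪A w, v⟫ = ⟪A v, w⟫ := hsym w v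
        simp only [starRingEnd_apply, star_trivial]
        rw [h1]; ring
      linarith [hexp ▸ h]
    have hd := discrim_le_zero (a := ⟪A w, w⟫) (b := 2 * ⟪A v, w⟫) (c := ⟪A v, v⟫)
      (fun t => by have := hq t; nlinarith [this])
    rw [discrim] at hd
    nlinarith [hd]
  intro v
  rcases eq_or_lt_of_le (norm_nonneg (A v)) with h | h
  · rw [← h]; positivity
  · have h1 : ⟪A v, A v⟫ = ‖A v‖ ^ 2 := real_inner_self_eq_norm_sq (A v)
    have h2 := hCS v (A v)
    rw [h1] at h2
    have h3 := hC v
    have h4 := hC (A v)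
    have h5 := h0 v
    have h6 := h0 (A v)
    have key : ‖A v‖ ^ 2 ≤ (c * ‖v‖) ^ 2 := by
      nlinarith [norm_nonneg v, norm_nonneg (A v)]
    exact (pow_le_pow_iff_left₀ (norm_nonneg _) (by positivity) two_ne_zero).mp key


/-- **Gradient descent converges linearly for locally strongly convex and smooth functions.**
If `f : ℝⁿ → ℝ` is twice continuously differentiable, `x_opt` is a global minimizer of `f`,
and `α • Iₙ ⪯ ∇²f(x) ⪯ β • Iₙ` (expressed via the Hessian quadratic form) for all `x` in the
ball `B_ζ(x_opt)` with `0 < α ≤ β`, then gradient descent with constant step size `1/β`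
started in the ball satisfies `‖x_t − x_opt‖ ≤ (1 − α/β)ᵗ ‖x₀ − x_opt‖` for all `t`
(in particular all iterates remain in the ball). -/
theorem gd_linear_convergence_strongly_convex_smooth
    (n : ℕ) (f : EuclideanSpace ℝ (Fin n) → ℝ) (xopt : EuclideanSpace ℝ (Fin n))
    (α β ζ : ℝ) (hα : 0 < α) (hαβ : α ≤ β) (hζ : 0 < ζ)
    (hf : ContDiff ℝ 2 f)
    (hmin : ∀ y, f xopt ≤ f y)
    (hhess : ∀ x ∈ Metric.closedBall xopt ζ, ∀ v : EuclideanSpace ℝ (Fin n),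
      α * ‖v‖ ^ 2 ≤ iteratedFDeriv ℝ 2 f x ![v, v] ∧
      iteratedFDeriv ℝ 2 f x ![v, v] ≤ β * ‖v‖ ^ 2)
    (x : ℕ → EuclideanSpace ℝ (Fin n))
    (hx0 : x 0 ∈ Metric.closedBall xopt ζ)
    (hupd : ∀ t : ℕ, x (t + 1) = x t - (1 / β) • gradient f (x t)) :
    ∀ t : ℕ, ‖x t - xopt‖ ≤ (1 - α / β) ^ t * ‖x 0 - xopt‖ ∧
      x t ∈ Metric.closedBall xopt ζ := by
  have hβ : 0 < β := hα.trans_le hαβ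
  set r : ℝ := 1 - α / β with hrdef
  have hr0 : 0 ≤ r := by
    have : α / β ≤ 1 := (div_le_one hβ).mpr hαβ
    simp only [hrdef]; linarith
  have hr1 : r ≤ 1 := by
    have : 0 < α / β := div_pos hα hβ
    simp only [hrdef]; linarith
  have hdf : Differentiable ℝ f := hf.differentiable (by norm_num)
  have hf1 : ContDiff ℝ 1 (fderiv ℝ f) := hf.fderiv_right (by norm_num)
  have hdf' : Differentiable ℝ (fderiv ℝ f) := hf1.differentiable one_ne_zero
  set L : (StrongDual ℝ (EuclideanSpace ℝ (Fin n))) →L[ℝ] EuclideanSpace ℝ (Fin n) :=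
    (InnerProductSpace.toDual ℝ
      (EuclideanSpace ℝ (Fin n))).symm.toContinuousLinearEquiv.toContinuousLinearMap with hLdef
  have hgradeq : gradient f = fun y => L (fderiv ℝ f y) := rfl
  set B : EuclideanSpace ℝ (Fin n) →
      EuclideanSpace ℝ (Fin n) →L[ℝ] EuclideanSpace ℝ (Fin n) :=
    fun y => L.comp (fderiv ℝ (fderiv ℝ f) y) with hBdef
  have hgrad : ∀ y, HasFDerivAt (gradient f) (B y) y := by
    intro y
    rw [hgradeq]
    exact L.hasFDerivAt.comp y (hdf' y).hasFDerivAt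
  have hB : ∀ (y v w : EuclideanSpace ℝ (Fin n)),
      ⟪B y v, w⟫ = fderiv ℝ (fderiv ℝ f) y v w := by
    intro y v w
    exact InnerProductSpace.toDual_symm_apply
  have hDsymm : ∀ (y v w : EuclideanSpace ℝ (Fin n)),
      fderiv ℝ (fderiv ℝ f) y v w = fderiv ℝ (fderiv ℝ f) y w v :=
    fun y v w => second_derivative_symmetric (fun z => (hdf z).hasFDerivAt)
      ((hdf' y).hasFDerivAt) v w
  have hBit : ∀ (y v w : EuclideanSpace ℝ (Fin n)),
      ⟪B y v, w⟫ = iteratedFDeriv ℝ 2 f y ![v, w] := by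
    intro y v w
    rw [iteratedFDeriv_two_apply, hB]
    simp
  -- the gradient descent map and its derivative
  set g : EuclideanSpace ℝ (Fin n) → EuclideanSpace ℝ (Fin n) :=
    fun y => y - (1 / β) • gradient f y with hgdef
  set g' : EuclideanSpace ℝ (Fin n) →
      EuclideanSpace ℝ (Fin n) →L[ℝ] EuclideanSpace ℝ (Fin n) :=
    fun y => ContinuousLinearMap.id ℝ _ - (1 / β) • B y with hg'def
  have hgderiv : ∀ y, HasFDerivAt g (g' y) y :=
    fun y => (hasFDerivAt_id y).sub ((hgrad y).const_smul (1 / β))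
  have hg'inner : ∀ (y v w : EuclideanSpace ℝ (Fin n)),
      ⟪g' y v, w⟫ = ⟪v, w⟫ - (1 / β) * ⟪B y v, w⟫ := by
    intro y v w
    simp [hg'def, inner_sub_left, real_inner_smul_left, Finset.mul_sum, mul_assoc]
  -- spectral bound on the ball
  have hbound : ∀ y ∈ Metric.closedBall xopt ζ, ‖g' y‖ ≤ r := by
    intro y hy
    refine ContinuousLinearMap.opNorm_le_bound _ hr0 ?_
    refine aux_psd_norm_le (g' y) r hr0 ?_ ?_ ?_
    · intro v w
      rw [hg'inner, hg'inner, hB, hB, hDsymm, real_inner_comm]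
    · intro v
      have h2 := (hhess y hy v).2
      rw [← hBit] at h2
      rw [hg'inner, real_inner_self_eq_norm_sq]
      have : (1 / β) * ⟪B y v, v⟫ ≤ (1 / β) * (β * ‖v‖ ^ 2) := by
        apply mul_le_mul_of_nonneg_left h2 (by positivity)
      have hβ' : (1 / β) * (β * ‖v‖ ^ 2) = ‖v‖ ^ 2 := by field_simp
      linarith
    · intro v
      have h1 := (hhess y hy v).1
      rw [← hBit] at h1
      rw [hg'inner, real_inner_self_eq_norm_sq]
      have : (1 / β) * (α * ‖v‖ ^ 2) ≤ (1 / β) * ⟪B y v, v⟫ :=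
        mul_le_mul_of_nonneg_left h1 (by positivity)
      have : ‖v‖ ^ 2 - (1 / β) * ⟪B y v, v⟫ ≤ ‖v‖ ^ 2 - α / β * ‖v‖ ^ 2 := by
        have hh : (1 / β) * (α * ‖v‖ ^ 2) = α / β * ‖v‖ ^ 2 := by ring
        linarith [hh ▸ this]
      calc ‖v‖ ^ 2 - (1 / β) * ⟪B y v, v⟫ ≤ ‖v‖ ^ 2 - α / β * ‖v‖ ^ 2 := this
        _ = r * ‖v‖ ^ 2 := by rw [hrdef]; ring
  -- contraction on the ball
  have hxoptmem : xopt ∈ Metric.closedBall xopt ζ := Metric.mem_closedBall_self hζ.le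
  have hcontr : ∀ y ∈ Metric.closedBall xopt ζ, ‖g y - g xopt‖ ≤ r * ‖y - xopt‖ := by
    intro y hy
    exact (convex_closedBall xopt ζ).norm_image_sub_le_of_norm_hasFDerivWithin_le
      (fun z hz => (hgderiv z).hasFDerivWithinAt) hbound hxoptmem hy
  -- fixed point
  have hlm : IsLocalMin f xopt := Filter.Eventually.of_forall (fun y => hmin y)
  have hfd0 : fderiv ℝ f xopt = 0 := hlm.fderiv_eq_zero
  have hgrad0 : gradient f xopt = 0 := by
    rw [hgradeq]; simp [hfd0]
  have hgfix : g xopt = xopt := by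
    simp [hgdef, hgrad0]
  -- induction
  intro t
  induction t with
  | zero =>
    refine ⟨by simp, hx0⟩
  | succ t ih =>
    obtain ⟨hb, hmem⟩ := ih
    have hstep : ‖x (t + 1) - xopt‖ ≤ r * ‖x t - xopt‖ := by
      have h := hcontr (x t) hmem
      rw [hgfix] at h
      rw [hupd t]
      exact h
    have h1 : ‖x (t + 1) - xopt‖ ≤ r ^ (t + 1) * ‖x 0 - xopt‖ := by
      calc ‖x (t + 1) - xopt‖ ≤ r * ‖x t - xopt‖ := hstep
        _ ≤ r * (r ^ t * ‖x 0 - xopt‖) := mul_le_mul_of_nonneg_left hb hr0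
        _ = r ^ (t + 1) * ‖x 0 - xopt‖ := by ring
    refine ⟨h1, ?_⟩
    rw [Metric.mem_closedBall, dist_eq_norm]
    have hx0' : ‖x 0 - xopt‖ ≤ ζ := by
      rw [Metric.mem_closedBall, dist_eq_norm] at hx0; exact hx0
    have hrpow : r ^ (t + 1) ≤ 1 := pow_le_one₀ hr0 hr1
    calc ‖x (t + 1) - xopt‖ ≤ r ^ (t + 1) * ‖x 0 - xopt‖ := h1
      _ ≤ 1 * ‖x 0 - xopt‖ := mul_le_mul_of_nonneg_right hrpow (norm_nonneg _)
      _ = ‖x 0 - xopt‖ := one_mul _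
      _ ≤ ζ := hx0'
end

section
/- Let x_opt ∈ ℝⁿ, let μ, λ, ζ > 0, and let g : ℝⁿ → ℝⁿ satisfy the regularity condition RC(μ, λ, ζ): for every x with ‖x − x_opt‖₂ ≤ ζ, 2·⟨g(x), x − x_opt⟩ ≥ μ·‖g(x)‖₂² + λ·‖x − x_opt‖₂². Then the iterates x_{t+1} = x_t − μ·g(x_t), started from any x₀ with ‖x₀ − x_opt‖₂ ≤ ζ, satisfy ‖x_t − x_opt‖₂² ≤ (1 − μλ)ᵗ · ‖x₀ − x_opt‖₂² for all t ≥ 0. -/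
/-- **Linear convergence under the regularity condition RC(μ, λ, ζ).**
If `g : ℝⁿ → ℝⁿ` satisfies `2⟨g(x), x − x_opt⟩ ≥ μ‖g(x)‖² + λ‖x − x_opt‖²` for all `x` in the
ball of radius `ζ` around `x_opt`, then the iterates `x_{t+1} = x_t − μ g(x_t)` started in that
ball satisfy `‖x_t − x_opt‖² ≤ (1 − μλ)ᵗ ‖x₀ − x_opt‖²` for all `t`. -/
theorem convergence_under_regularity_condition
    (n : ℕ) (g : EuclideanSpace ℝ (Fin n) → EuclideanSpace ℝ (Fin n))
    (xopt : EuclideanSpace ℝ (Fin n)) (μ lam ζ : ℝ)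
    (hμ : 0 < μ) (hlam : 0 < lam) (hζ : 0 < ζ)
    (hRC : ∀ x : EuclideanSpace ℝ (Fin n), ‖x - xopt‖ ≤ ζ →
      2 * (inner ℝ (g x) (x - xopt) : ℝ) ≥ μ * ‖g x‖ ^ 2 + lam * ‖x - xopt‖ ^ 2)
    (x : ℕ → EuclideanSpace ℝ (Fin n))
    (hx0 : ‖x 0 - xopt‖ ≤ ζ)
    (hupd : ∀ t : ℕ, x (t + 1) = x t - μ • g (x t)) :
    ∀ t : ℕ, ‖x t - xopt‖ ^ 2 ≤ (1 - μ * lam) ^ t * ‖x 0 - xopt‖ ^ 2 := by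
  by_cases h0 : ‖x 0 - xopt‖ = 0
  · -- degenerate case: x₀ = xopt, and the iterates stay there
    have hx0eq : x 0 = xopt := by
      have := norm_eq_zero.mp h0; exact sub_eq_zero.mp this
    have hfix : ∀ t, x t = xopt := by
      intro t
      induction t with
      | zero => exact hx0eq
      | succ t ih =>
        have h := hRC (x t) (by rw [ih]; simp [le_of_lt hζ])
        rw [ih] at h
        simp only [sub_self, inner_zero_right, norm_zero] at h
        have hg : ‖g xopt‖ ^ 2 ≤ 0 := by nlinarith
        have hg0 : g xopt = 0 := by
          have := sq_nonneg ‖g xopt‖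
          have : ‖g xopt‖ = 0 := by nlinarith
          exact norm_eq_zero.mp this
        rw [hupd t, ih, hg0]; simp
    intro t
    rw [hfix t, h0]; simp
  · have hd0 : 0 < ‖x 0 - xopt‖ := lt_of_le_of_ne (norm_nonneg _) (Ne.symm h0)
    -- μ * lam ≤ 1
    have hml : μ * lam ≤ 1 := by
      have h := hRC (x 0) hx0
      have hcs : (inner ℝ (g (x 0)) (x 0 - xopt) : ℝ) ≤ ‖g (x 0)‖ * ‖x 0 - xopt‖ :=
        real_inner_le_norm _ _
      nlinarith [mul_le_mul_of_nonneg_left hcs (by positivity : (0:ℝ) ≤ 2 * μ),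
        mul_le_mul_of_nonneg_left h (le_of_lt hμ),
        sq_nonneg (μ * ‖g (x 0)‖ - ‖x 0 - xopt‖), mul_pos hd0 hd0]
    have hmlpos : 0 ≤ 1 - μ * lam := by linarith
    -- strengthened induction
    have key : ∀ t : ℕ, ‖x t - xopt‖ ^ 2 ≤ (1 - μ * lam) ^ t * ‖x 0 - xopt‖ ^ 2 ∧
        ‖x t - xopt‖ ≤ ζ := by
      intro t
      induction t with
      | zero => exact ⟨by simp, hx0⟩
      | succ t ih =>
        obtain ⟨ih1, ih2⟩ := ih
        have h := hRC (x t) ih2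
        have hexp : x (t + 1) - xopt = (x t - xopt) - μ • g (x t) := by
          rw [hupd t]; abel
        have hnorm : ‖x (t + 1) - xopt‖ ^ 2 =
            ‖x t - xopt‖ ^ 2 - 2 * (μ * (inner ℝ (g (x t)) (x t - xopt) : ℝ))
              + μ ^ 2 * ‖g (x t)‖ ^ 2 := by
          rw [hexp, @norm_sub_sq_real, norm_smul, real_inner_smul_right,
            real_inner_comm]
          simp [mul_pow, abs_of_pos hμ]
        have hstep : ‖x (t + 1) - xopt‖ ^ 2 ≤ (1 - μ * lam) * ‖x t - xopt‖ ^ 2 := by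
          rw [hnorm]; nlinarith
        constructor
        · calc ‖x (t + 1) - xopt‖ ^ 2 ≤ (1 - μ * lam) * ‖x t - xopt‖ ^ 2 := hstep
            _ ≤ (1 - μ * lam) * ((1 - μ * lam) ^ t * ‖x 0 - xopt‖ ^ 2) := by
                exact mul_le_mul_of_nonneg_left ih1 hmlpos
            _ = (1 - μ * lam) ^ (t + 1) * ‖x 0 - xopt‖ ^ 2 := by ring
        · have h1 : ‖x (t + 1) - xopt‖ ^ 2 ≤ ζ ^ 2 := by
            have h2 : (1 - μ * lam) * ‖x t - xopt‖ ^ 2 ≤ ‖x t - xopt‖ ^ 2 := by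
              nlinarith [mul_nonneg (mul_pos hμ hlam).le (sq_nonneg ‖x t - xopt‖)]
            nlinarith [ih2, norm_nonneg (x t - xopt)]
          nlinarith [norm_nonneg (x (t + 1) - xopt)]
    exact fun t => (key t).1
end

section
/- Let M ∈ ℝⁿˣⁿ be symmetric positive semidefinite with eigendecomposition M = Σᵢ λᵢ·uᵢuᵢᵀ, where λ₁ > λ₂ ≥ … ≥ λₙ ≥ 0 and u₁, …, uₙ are orthonormal eigenvectors, and let f(x) = (1/4)·‖xxᵀ − M‖_F². Suppose the constant step size η_t ≡ 1/(4.5·λ₁) is used and the initial point satisfies ‖x₀ − √λ₁·u₁‖₂ ≤ (λ₁ − λ₂)/(15·√λ₁). Then the gradient descent iterates x_{t+1} = x_t − η_t·∇f(x_t) obey ‖x_t − √λ₁·u₁‖₂ ≤ (1 − (λ₁ − λ₂)/(18·λ₁))ᵗ · ‖x₀ − √λ₁·u₁‖₂ for all t ≥ 0. -/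
open Matrix

/-- The Euclidean (ℓ₂) norm of a vector in `ℝⁿ`. -/
noncomputable def l2norm {p : ℕ} (v : Fin p → ℝ) : ℝ :=
  Real.sqrt (∑ i, v i ^ 2)

lemma l2norm_eq {p : ℕ} (v : Fin p → ℝ) :
    l2norm v = ‖(WithLp.equiv 2 (Fin p → ℝ)).symm v‖ := by
  rw [EuclideanSpace.norm_eq]; simp [l2norm, sq_abs]

lemma l2norm_nonneg {p : ℕ} (v : Fin p → ℝ) : 0 ≤ l2norm v := Real.sqrt_nonneg _

lemma l2norm_sq {p : ℕ} (v : Fin p → ℝ) : l2norm v ^ 2 = ∑ i, v i ^ 2 := by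
  rw [l2norm, Real.sq_sqrt]; positivity

lemma l2norm_add_le {p : ℕ} (a b : Fin p → ℝ) :
    l2norm (a + b) ≤ l2norm a + l2norm b := by
  simp only [l2norm_eq]
  exact norm_add_le ((WithLp.equiv 2 (Fin p → ℝ)).symm a) ((WithLp.equiv 2 (Fin p → ℝ)).symm b)

lemma l2norm_smul {p : ℕ} (c : ℝ) (v : Fin p → ℝ) : l2norm (c • v) = |c| * l2norm v := by
  simp only [l2norm_eq]
  have h : (WithLp.equiv 2 (Fin p → ℝ)).symm (c • v) = c • (WithLp.equiv 2 (Fin p → ℝ)).symm v := rfl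
  rw [h, norm_smul, Real.norm_eq_abs]

lemma l2norm_mul_le {p : ℕ} (D v : Fin p → ℝ) (K : ℝ) (hK : 0 ≤ K) (h : ∀ i, |D i| ≤ K) :
    l2norm (fun i => D i * v i) ≤ K * l2norm v := by
  rw [l2norm, l2norm,
    show K * Real.sqrt (∑ i, v i ^ 2) = Real.sqrt (K ^ 2 * ∑ i, v i ^ 2) by
      rw [Real.sqrt_mul (by positivity), Real.sqrt_sq hK]]
  apply Real.sqrt_le_sqrt
  rw [Finset.mul_sum]
  refine Finset.sum_le_sum fun i _ => ?_
  have h2 : D i ^ 2 ≤ K ^ 2 := by nlinarith [h i, abs_nonneg (D i), sq_abs (D i)]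
  rw [mul_pow]
  exact mul_le_mul_of_nonneg_right h2 (sq_nonneg _)

lemma l2norm_single {p : ℕ} (i0 : Fin p) (a : ℝ) :
    l2norm (fun i => if i = i0 then a else 0) = |a| := by
  rw [l2norm]
  have : ∀ i : Fin p, (if i = i0 then a else 0) ^ 2 = if i = i0 then a ^ 2 else 0 := by
    intro i; split <;> simp
  simp only [this, Finset.sum_ite_eq', Finset.mem_univ, if_true, Real.sqrt_sq_eq_abs]

lemma key_ineq (r ε Δ : ℝ) (hr0 : 0 < r) (hε0 : 0 ≤ ε) (hΔ : 0 < Δ)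
    (hre : 15 * r * ε ≤ Δ) (h225 : 225 * ε ^ 2 ≤ Δ) :
    12 * r * ε ^ 2 + 4 * ε ^ 3 ≤ 3 * Δ * ε := by
  nlinarith [mul_le_mul_of_nonneg_right hre hε0, mul_le_mul_of_nonneg_right h225 hε0,
    mul_nonneg hΔ.le hε0]

lemma step_bound {p : ℕ} (L Δ η : ℝ) (hL : 0 < L) (hΔ : 0 < Δ) (hΔL : Δ ≤ L)
    (hη : η = 1 / (4.5 * L)) (C C' : Fin p → ℝ) (i0 : Fin p)
    (lamv : Fin p → ℝ) (hlam : ∀ i, i ≠ i0 → Δ ≤ L - lamv i ∧ L - lamv i ≤ L)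
    (s : ℝ) (hs : s = 2 * Real.sqrt L * C i0 + ∑ j, C j ^ 2)
    (hC' : ∀ i, C' i = (if i = i0 then 1 - 2 * η * L else 1 - η * (L - lamv i)) * C i
        + (-(η * s)) * C i + (if i = i0 then -(η * (∑ j, C j ^ 2) * Real.sqrt L) else 0))
    (hsmall : l2norm C ≤ Δ / (15 * Real.sqrt L)) :
    l2norm C' ≤ (1 - Δ / (18 * L)) * l2norm C := by
  set r := Real.sqrt L with hr
  have hr0 : 0 < r := Real.sqrt_pos.mpr hL
  have hr2 : r ^ 2 = L := Real.sq_sqrt hL.le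
  set ε := l2norm C with hε
  have hε0 : 0 ≤ ε := l2norm_nonneg C
  have hε2 : ε ^ 2 = ∑ j, C j ^ 2 := l2norm_sq C
  have hηL : η * L = 1 / 4.5 := by rw [hη]; field_simp
  have hη0 : 0 < η := by rw [hη]; positivity
  -- decomposition
  set D : Fin p → ℝ := fun i => if i = i0 then 1 - 2 * η * L else 1 - η * (L - lamv i) with hD
  set w : Fin p → ℝ := fun i => if i = i0 then -(η * (∑ j, C j ^ 2) * r) else 0 with hw
  have hdec : C' = (fun i => D i * C i) + ((-(η * s)) • C + w) := by
    funext i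
    simp only [Pi.add_apply, Pi.smul_apply, smul_eq_mul, hD, hw]
    rw [hC' i]
    ring
  set K : ℝ := 1 - η * Δ with hK
  have hηΔ : η * Δ ≤ 1 / 4.5 := by
    rw [← hηL]; exact mul_le_mul_of_nonneg_left hΔL hη0.le
  have hK0 : 0 ≤ K := by rw [hK]; linarith
  have hDK : ∀ i, |D i| ≤ K := by
    intro i
    have hDi : D i = if i = i0 then 1 - 2 * η * L else 1 - η * (L - lamv i) := rfl
    rw [hDi]
    by_cases h : i = i0
    · rw [if_pos h, abs_le]
      constructor <;> linarith
    · rw [if_neg h]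
      obtain ⟨h1, h2⟩ := hlam i h
      have k1 : η * Δ ≤ η * (L - lamv i) := mul_le_mul_of_nonneg_left h1 hη0.le
      have k2 : η * (L - lamv i) ≤ η * L := mul_le_mul_of_nonneg_left h2 hη0.le
      rw [abs_le]; constructor <;> [linarith; linarith]
  -- norm bound pieces
  have hb1 : l2norm (fun i => D i * C i) ≤ K * ε := l2norm_mul_le D C K hK0 hDK
  have hCi0 : C i0 ^ 2 ≤ ε ^ 2 := by
    rw [hε2]
    exact Finset.single_le_sum (fun j _ => sq_nonneg (C j)) (Finset.mem_univ i0)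
  have habsC : |C i0| ≤ ε := by
    rw [← Real.sqrt_sq_eq_abs, ← Real.sqrt_sq hε0]
    exact Real.sqrt_le_sqrt hCi0
  have habss : |s| ≤ 2 * r * ε + ε ^ 2 := by
    rw [hs, ← hε2]
    calc |2 * r * C i0 + ε ^ 2| ≤ |2 * r * C i0| + |ε ^ 2| := abs_add_le _ _
      _ ≤ 2 * r * ε + ε ^ 2 := by
          rw [abs_mul, abs_of_nonneg (by positivity : (0:ℝ) ≤ 2 * r), abs_of_nonneg (sq_nonneg ε)]
          have := mul_le_mul_of_nonneg_left habsC (by positivity : (0:ℝ) ≤ 2 * r)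
          linarith
  have hb2 : l2norm ((-(η * s)) • C) ≤ η * (2 * r * ε + ε ^ 2) * ε := by
    rw [l2norm_smul, abs_neg, abs_mul, abs_of_nonneg hη0.le]
    have : |s| * ε ≤ (2 * r * ε + ε ^ 2) * ε := mul_le_mul_of_nonneg_right habss hε0
    nlinarith [hη0.le]
  have hb3 : l2norm w ≤ η * ε ^ 2 * r := by
    rw [hw, l2norm_single, abs_neg, ← hε2]
    rw [abs_of_nonneg (by positivity)]
  have htot : l2norm C' ≤ K * ε + (η * (2 * r * ε + ε ^ 2) * ε + η * ε ^ 2 * r) := by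
    rw [hdec]
    calc l2norm ((fun i => D i * C i) + ((-(η * s)) • C + w))
        ≤ l2norm (fun i => D i * C i) + l2norm ((-(η * s)) • C + w) := l2norm_add_le _ _
      _ ≤ l2norm (fun i => D i * C i) + (l2norm ((-(η * s)) • C) + l2norm w) := by
          have := l2norm_add_le ((-(η * s)) • C) w; linarith
      _ ≤ K * ε + (η * (2 * r * ε + ε ^ 2) * ε + η * ε ^ 2 * r) := by linarith
  -- numeric conclusion
  have hre : 15 * r * ε ≤ Δ := by
    have h15 : (0:ℝ) < 15 * r := by positivity
    calc 15 * r * ε ≤ 15 * r * (Δ / (15 * r)) := by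
          exact mul_le_mul_of_nonneg_left hsmall h15.le
      _ = Δ := by field_simp
  have h225 : 225 * ε ^ 2 ≤ Δ := by
    nlinarith [sq_nonneg ε, mul_le_mul hre hre (by positivity) hΔ.le]
  have hηe : η = 2 / (9 * r ^ 2) := by
    rw [hη, hr2]; rw [div_eq_div_iff (by positivity) (by positivity)]; ring
  have key : 12 * r * ε ^ 2 + 4 * ε ^ 3 ≤ 3 * Δ * ε :=
    key_ineq r ε Δ hr0 hε0 hΔ hre h225
  have hrne : (r : ℝ) ≠ 0 := ne_of_gt hr0
  have hid : (1 - Δ / (18 * r ^ 2)) * ε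
      - ((1 - (2 / (9 * r ^ 2)) * Δ) * ε + ((2 / (9 * r ^ 2)) * (2 * r * ε + ε ^ 2) * ε
        + (2 / (9 * r ^ 2)) * ε ^ 2 * r))
      = (3 * Δ * ε - (12 * r * ε ^ 2 + 4 * ε ^ 3)) / (18 * r ^ 2) := by
    field_simp
    ring
  have hpos : 0 ≤ (3 * Δ * ε - (12 * r * ε ^ 2 + 4 * ε ^ 3)) / (18 * r ^ 2) :=
    div_nonneg (by linarith) (by positivity)
  have hsuff : (1 - η * Δ) * ε + (η * (2 * r * ε + ε ^ 2) * ε + η * ε ^ 2 * r)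
      ≤ (1 - Δ / (18 * L)) * ε := by
    rw [hηe, ← hr2]
    linarith [hid ▸ hpos, hpos, hid]
  rw [hK] at htot
  linarith

/-- **Local linear convergence of gradient descent for rank-1 matrix factorization.**
Let `M = ∑ᵢ λᵢ uᵢuᵢᵀ` be symmetric PSD with `λ₁ > λ₂ ≥ … ≥ λₙ ≥ 0` and orthonormal
eigenvectors `uᵢ`, and `f(x) = ¼‖xxᵀ − M‖_F²` with gradient `∇f(x) = (xxᵀ − M)x`.
If the step size is `η ≡ 1/(4.5 λ₁)` and `‖x₀ − √λ₁ u₁‖₂ ≤ (λ₁ − λ₂)/(15√λ₁)`, then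
gradient descent satisfies
`‖x_t − √λ₁ u₁‖₂ ≤ (1 − (λ₁ − λ₂)/(18 λ₁))ᵗ ‖x₀ − √λ₁ u₁‖₂` for all `t ≥ 0`. -/
theorem gd_rank_one_matrix_factorization_local_convergence
    (n : ℕ) (hn : 1 < n)
    (M : Matrix (Fin n) (Fin n) ℝ)
    (lam : Fin n → ℝ) (u : Fin n → (Fin n → ℝ))
    (horth : ∀ i j : Fin n, dotProduct (u i) (u j) = if i = j then 1 else 0)
    (hdecomp : M = ∑ i, lam i • Matrix.vecMulVec (u i) (u i))
    (hmono : Antitone lam)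
    (hnonneg : ∀ i, 0 ≤ lam i)
    (hgap : lam ⟨1, hn⟩ < lam ⟨0, by omega⟩)
    (x : ℕ → (Fin n → ℝ)) (η : ℝ)
    (hη : η = 1 / (4.5 * lam ⟨0, by omega⟩))
    (hinit : l2norm (x 0 - Real.sqrt (lam ⟨0, by omega⟩) • u ⟨0, by omega⟩)
      ≤ (lam ⟨0, by omega⟩ - lam ⟨1, hn⟩) / (15 * Real.sqrt (lam ⟨0, by omega⟩)))
    (hupd : ∀ t : ℕ, x (t + 1) =
      x t - η • Matrix.mulVec (Matrix.vecMulVec (x t) (x t) - M) (x t)) :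
    ∀ t : ℕ, l2norm (x t - Real.sqrt (lam ⟨0, by omega⟩) • u ⟨0, by omega⟩)
      ≤ (1 - (lam ⟨0, by omega⟩ - lam ⟨1, hn⟩) / (18 * lam ⟨0, by omega⟩)) ^ t *
        l2norm (x 0 - Real.sqrt (lam ⟨0, by omega⟩) • u ⟨0, by omega⟩) := by
  have h0n : 0 < n := by omega
  -- abbreviations
  let i0 : Fin n := ⟨0, h0n⟩
  let i1 : Fin n := ⟨1, hn⟩
  have hgap' : lam i1 < lam i0 := hgap
  have hL : 0 < lam i0 := lt_of_le_of_lt (hnonneg i1) hgap'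
  have hΔ : 0 < lam i0 - lam i1 := sub_pos.mpr hgap'
  have hΔL : lam i0 - lam i1 ≤ lam i0 := by linarith [hnonneg i1]
  set L : ℝ := lam i0 with hLdef
  set Δ : ℝ := lam i0 - lam i1 with hΔdef
  set r : ℝ := Real.sqrt L with hrdef
  have hr0 : 0 < r := Real.sqrt_pos.mpr hL
  have hr2 : r ^ 2 = L := Real.sq_sqrt hL.le
  -- completeness of the orthonormal basis
  have hcomp : ∀ a b : Fin n, (∑ i, u i a * u i b) = if a = b then (1:ℝ) else 0 := by
    have hU : (Matrix.of u) * (Matrix.of u)ᵀ = 1 := by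
      ext i j
      simpa [Matrix.mul_apply, dotProduct, Matrix.one_apply] using horth i j
    have hU' := mul_eq_one_comm.mp hU
    intro a b
    have h2 := congrFun (congrFun hU' a) b
    simpa [Matrix.mul_apply, Matrix.transpose_apply, Matrix.one_apply] using h2
  -- Parseval
  have hpars : ∀ v : Fin n → ℝ, (∑ i, (u i ⬝ᵥ v) ^ 2) = ∑ a, v a ^ 2 := by
    intro v
    have hexp : ∀ i, (u i ⬝ᵥ v) ^ 2 = ∑ a, ∑ b, v a * v b * (u i a * u i b) := by
      intro i
      rw [sq, dotProduct, Finset.sum_mul_sum]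
      exact Finset.sum_congr rfl fun a _ => Finset.sum_congr rfl fun b _ => by ring
    simp only [hexp]
    rw [Finset.sum_comm]
    have h1 : ∀ a : Fin n, (∑ i, ∑ b, v a * v b * (u i a * u i b)) = v a ^ 2 := by
      intro a
      rw [Finset.sum_comm]
      have h2 : ∀ b : Fin n, (∑ i, v a * v b * (u i a * u i b))
          = v a * v b * (if a = b then (1:ℝ) else 0) := by
        intro b
        rw [← Finset.mul_sum, hcomp]
      simp only [h2, mul_ite, mul_one, mul_zero]
      rw [Finset.sum_ite_eq]
      simp [sq]
    exact Finset.sum_congr rfl fun a _ => h1 a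
  -- auxiliary mulVec computations
  have hvmv : ∀ a b v : Fin n → ℝ, (Matrix.vecMulVec a b) *ᵥ v = (b ⬝ᵥ v) • a := by
    intro a b v
    funext i
    simp only [Matrix.mulVec, Matrix.vecMulVec_apply, dotProduct, Pi.smul_apply,
      smul_eq_mul, Finset.sum_mul]
    exact Finset.sum_congr rfl fun j _ => by ring
  have hMv : ∀ (v : Fin n → ℝ) (i : Fin n), u i ⬝ᵥ (M *ᵥ v) = lam i * (u i ⬝ᵥ v) := by
    intro v i
    have hsum : M *ᵥ v = ∑ j, lam j • ((u j ⬝ᵥ v) • u j) := by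
      rw [hdecomp]
      funext a
      simp only [Matrix.mulVec, dotProduct, Finset.sum_apply, Pi.smul_apply,
        Matrix.sum_apply, Matrix.smul_apply, Matrix.vecMulVec_apply, smul_eq_mul,
        Finset.sum_mul]
      rw [Finset.sum_comm]
      refine Finset.sum_congr rfl fun j _ => ?_
      rw [Finset.mul_sum]
      exact Finset.sum_congr rfl fun b _ => by ring
    rw [hsum]
    have hdsum : u i ⬝ᵥ (∑ j, lam j • ((u j ⬝ᵥ v) • u j))
        = ∑ j, lam j * ((u j ⬝ᵥ v) * (u i ⬝ᵥ u j)) := by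
      simp only [dotProduct, Finset.sum_apply, Pi.smul_apply, smul_eq_mul,
        Finset.mul_sum]
      rw [Finset.sum_comm]
      exact Finset.sum_congr rfl fun j _ => Finset.sum_congr rfl fun a _ => by ring
    rw [hdsum]
    simp only [horth]
    simp only [mul_ite, mul_one, mul_zero]
    rw [Finset.sum_ite_eq]
    simp
  -- the coordinate recurrence
  have hrec : ∀ (t : ℕ) (i : Fin n), u i ⬝ᵥ x (t + 1)
      = (u i ⬝ᵥ x t) * (1 - η * ((x t ⬝ᵥ x t) - lam i)) := by
    intro t i
    rw [hupd t]
    rw [dotProduct_sub, dotProduct_smul, Matrix.sub_mulVec, dotProduct_sub, hvmv, hMv]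
    rw [dotProduct_smul]
    simp only [smul_eq_mul]
    ring
  -- centered coordinates
  set C : ℕ → Fin n → ℝ := fun t i => u i ⬝ᵥ x t - (if i = i0 then r else 0) with hCdef
  have hdot : ∀ (t : ℕ) (i : Fin n), u i ⬝ᵥ (x t - r • u i0) = C t i := by
    intro t i
    rw [dotProduct_sub, dotProduct_smul, horth i i0]
    simp only [smul_eq_mul, mul_ite, mul_one, mul_zero, hCdef]
  have hnorm : ∀ t : ℕ, l2norm (x t - r • u i0) = l2norm (C t) := by
    intro t
    rw [l2norm, l2norm]
    congr 1
    rw [← hpars (x t - r • u i0)]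
    exact Finset.sum_congr rfl fun i _ => by rw [hdot]
  -- the squared norm of x t
  have hS : ∀ t : ℕ, x t ⬝ᵥ x t = L + (2 * r * C t i0 + ∑ j, C t j ^ 2) := by
    intro t
    have h1 : x t ⬝ᵥ x t = ∑ a, x t a ^ 2 := by
      simp [dotProduct, sq]
    have h2 : ∀ i : Fin n, (u i ⬝ᵥ x t) ^ 2
        = C t i ^ 2 + (if i = i0 then 2 * r * C t i0 + r ^ 2 else 0) := by
      intro i
      by_cases h : i = i0
      · subst h
        have e : C t i0 = u i0 ⬝ᵥ x t - r := by simp [hCdef]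
        rw [if_pos rfl, e]
        ring
      · have e : C t i = u i ⬝ᵥ x t := by simp [hCdef, h]
        rw [if_neg h, e]
        ring
    have h3 : (∑ i, (u i ⬝ᵥ x t) ^ 2)
        = (∑ i, C t i ^ 2) + (2 * r * C t i0 + r ^ 2) := by
      rw [Finset.sum_congr rfl fun i _ => h2 i, Finset.sum_add_distrib,
        Finset.sum_ite_eq' Finset.univ i0]
      simp
    rw [h1, ← hpars (x t), h3, hr2]
    ring
  -- the recurrence in centered coordinates
  have hCrec : ∀ t : ℕ, ∀ i : Fin n, C (t + 1) i
      = (if i = i0 then 1 - 2 * η * L else 1 - η * (L - lam i)) * C t i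
        + (-(η * (2 * r * C t i0 + ∑ j, C t j ^ 2))) * C t i
        + (if i = i0 then -(η * (∑ j, C t j ^ 2) * r) else 0) := by
    intro t i
    by_cases h : i = i0
    · subst h
      have e0 : C t i0 = u i0 ⬝ᵥ x t - r := by simp [hCdef]
      have e1 : C (t + 1) i0 = u i0 ⬝ᵥ x (t + 1) - r := by simp [hCdef]
      have e2 : u i0 ⬝ᵥ x t = C t i0 + r := by rw [e0]; ring
      rw [if_pos rfl, if_pos rfl, e1, hrec t i0, hS t, e2]
      have hLe : lam i0 = L := rfl
      rw [hLe, ← hr2]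
      ring
    · have e1 : C (t + 1) i = u i ⬝ᵥ x (t + 1) := by simp [hCdef, h]
      have e2 : u i ⬝ᵥ x t = C t i := by simp [hCdef, h]
      rw [if_neg h, if_neg h, e1, hrec t i, hS t, e2]
      ring
  -- contraction at each step
  have hρ : ∀ t : ℕ, l2norm (C t) ≤ Δ / (15 * r) →
      l2norm (C (t + 1)) ≤ (1 - Δ / (18 * L)) * l2norm (C t) := by
    intro t hsmall
    refine step_bound L Δ η hL hΔ hΔL ?_ (C t) (C (t + 1)) i0 lam ?_
      (2 * r * C t i0 + ∑ j, C t j ^ 2) rfl (hCrec t) hsmall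
    · exact hη
    · intro i hi
      have h1i : i1 ≤ i := by
        have : (1 : ℕ) ≤ i.val := by
          rcases Nat.eq_zero_or_pos i.val with h | h
          · exact absurd (Fin.ext h : i = i0) hi
          · exact h
        exact this
      have hlami : lam i ≤ lam i1 := hmono h1i
      constructor
      · rw [hΔdef]; linarith
      · linarith [hnonneg i]
  -- bounds on the contraction factor
  have h18L : (0:ℝ) < 18 * L := by positivity
  have hρ0 : 0 ≤ 1 - Δ / (18 * L) := by
    have : Δ / (18 * L) ≤ 1 / 18 := by
      rw [div_le_div_iff₀ h18L (by norm_num)]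
      linarith
    linarith
  have hρ1 : 1 - Δ / (18 * L) ≤ 1 := by
    have : 0 ≤ Δ / (18 * L) := div_nonneg hΔ.le h18L.le
    linarith
  have hinit' : l2norm (C 0) ≤ Δ / (15 * r) := by
    rw [← hnorm 0]; exact hinit
  -- main induction
  have key : ∀ t : ℕ, l2norm (C t) ≤ (1 - Δ / (18 * L)) ^ t * l2norm (C 0) := by
    intro t
    induction t with
    | zero => simp
    | succ t ih =>
      have hpow : (1 - Δ / (18 * L)) ^ t ≤ 1 := pow_le_one₀ hρ0 hρ1
      have hsmall : l2norm (C t) ≤ Δ / (15 * r) := by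
        have h1 : l2norm (C t) ≤ l2norm (C 0) := by
          have := mul_le_mul_of_nonneg_right hpow (l2norm_nonneg (C 0))
          calc l2norm (C t) ≤ (1 - Δ / (18 * L)) ^ t * l2norm (C 0) := ih
            _ ≤ 1 * l2norm (C 0) := this
            _ = l2norm (C 0) := one_mul _
        exact le_trans h1 hinit'
      calc l2norm (C (t + 1)) ≤ (1 - Δ / (18 * L)) * l2norm (C t) := hρ t hsmall
        _ ≤ (1 - Δ / (18 * L)) * ((1 - Δ / (18 * L)) ^ t * l2norm (C 0)) :=
            mul_le_mul_of_nonneg_left ih hρ0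
        _ = (1 - Δ / (18 * L)) ^ (t + 1) * l2norm (C 0) := by ring
  intro t
  have hfin : l2norm (x t - r • u i0)
      ≤ (1 - Δ / (18 * L)) ^ t * l2norm (x 0 - r • u i0) := by
    rw [hnorm t, hnorm 0]
    exact key t
  exact hfin
end

section
/- Let 𝒜 : ℝ^{n₁×n₂} → ℝᵐ be a linear operator satisfying the 2r-RIP with RIP constant δ_{2r} < 1. Then for all matrices X, Y ∈ ℝ^{n₁×n₂} each of rank at most r, |⟨𝒜(X), 𝒜(Y)⟩ − ⟨X, Y⟩| ≤ δ_{2r}·‖X‖_F·‖Y‖_F, where ⟨X, Y⟩ = Tr(XᵀY). -/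
open Matrix

/-- The Frobenius norm of a real matrix. -/
noncomputable def frobNorm {p q : ℕ} (A : Matrix (Fin p) (Fin q) ℝ) : ℝ :=
  Real.sqrt (∑ i, ∑ j, (A i j) ^ 2)

/-- The trace inner product `⟨X, Y⟩ = Tr(XᵀY)` of two real matrices. -/
def mip {p q : ℕ} (A B : Matrix (Fin p) (Fin q) ℝ) : ℝ :=
  Matrix.trace (Aᵀ * B)

lemma frobNorm_nonneg {p q : ℕ} (A : Matrix (Fin p) (Fin q) ℝ) : 0 ≤ frobNorm A :=
  Real.sqrt_nonneg _

lemma frobNorm_sq {p q : ℕ} (A : Matrix (Fin p) (Fin q) ℝ) :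
    frobNorm A ^ 2 = ∑ i, ∑ j, (A i j) ^ 2 := by
  rw [frobNorm, Real.sq_sqrt]
  positivity

lemma mip_eq_sum {p q : ℕ} (A B : Matrix (Fin p) (Fin q) ℝ) :
    mip A B = ∑ i, ∑ j, A i j * B i j := by
  rw [mip, Matrix.trace]
  rw [Finset.sum_comm]
  simp [Matrix.diag, Matrix.mul_apply, Matrix.transpose_apply]

lemma frobNorm_eq_zero {p q : ℕ} {A : Matrix (Fin p) (Fin q) ℝ}
    (h : frobNorm A = 0) : A = 0 := by
  have h2 : ∑ i, ∑ j, (A i j) ^ 2 = 0 := by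
    have := frobNorm_sq A
    rw [h] at this; simpa using this.symm
  ext i j
  have hi := (Finset.sum_eq_zero_iff_of_nonneg (fun i _ => by positivity)).mp h2 i (by simp)
  have hj := (Finset.sum_eq_zero_iff_of_nonneg (fun j _ => by positivity)).mp hi j (by simp)
  simpa using pow_eq_zero_iff (n := 2) (by norm_num) |>.mp hj

lemma frobNorm_smul {p q : ℕ} (c : ℝ) (A : Matrix (Fin p) (Fin q) ℝ) :
    frobNorm (c • A) = |c| * frobNorm A := by
  rw [frobNorm, frobNorm]
  have : ∑ i, ∑ j, ((c • A) i j) ^ 2 = c ^ 2 * ∑ i, ∑ j, (A i j) ^ 2 := by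
    simp [Finset.mul_sum, mul_pow]
  rw [this, Real.sqrt_mul (by positivity), Real.sqrt_sq_eq_abs]

lemma mip_smul_smul {p q : ℕ} (a b : ℝ) (A B : Matrix (Fin p) (Fin q) ℝ) :
    mip (a • A) (b • B) = a * b * mip A B := by
  simp only [mip_eq_sum, Matrix.smul_apply, smul_eq_mul, Finset.mul_sum]
  congr 1; ext i; congr 1; ext j; ring

lemma rank_smul' {p q : ℕ} (c : ℝ) (hc : c ≠ 0) (A : Matrix (Fin p) (Fin q) ℝ) :
    (c • A).rank = A.rank := by
  have : (c • A).mulVecLin = c • A.mulVecLin := by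
    ext x
    simp [Matrix.mulVecLin_apply, Matrix.smul_mulVec]
  rw [Matrix.rank, this, LinearMap.range_smul _ _ hc, Matrix.rank]

lemma rank_add_le' {p q : ℕ} (A B : Matrix (Fin p) (Fin q) ℝ) :
    (A + B).rank ≤ A.rank + B.rank := by
  rw [Matrix.rank, Matrix.rank, Matrix.rank, Matrix.mulVecLin_add]
  have hle : LinearMap.range (A.mulVecLin + B.mulVecLin) ≤
      LinearMap.range A.mulVecLin ⊔ LinearMap.range B.mulVecLin := by
    rintro x ⟨y, rfl⟩
    exact Submodule.add_mem_sup ⟨y, rfl⟩ ⟨y, rfl⟩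
  exact le_trans (Submodule.finrank_mono hle)
    (Submodule.finrank_add_le_finrank_add_finrank _ _)

lemma rank_neg' {p q : ℕ} (A : Matrix (Fin p) (Fin q) ℝ) : (-A).rank = A.rank := by
  have : -A = (-1 : ℝ) • A := by simp
  rw [this, rank_smul' _ (by norm_num)]

-- polarization for mip
lemma mip_polar {p q : ℕ} (A B : Matrix (Fin p) (Fin q) ℝ) :
    frobNorm (A + B) ^ 2 - frobNorm (A - B) ^ 2 = 4 * mip A B := by
  simp only [frobNorm_sq, mip_eq_sum, ← Finset.sum_sub_distrib, Finset.mul_sum]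
  congr 1; ext i; congr 1; ext j
  simp [Matrix.add_apply, Matrix.sub_apply]; ring

lemma inner_polar {m : ℕ} (x y : EuclideanSpace ℝ (Fin m)) :
    ‖x + y‖ ^ 2 - ‖x - y‖ ^ 2 = 4 * (inner ℝ x y : ℝ) := by
  have h1 := real_inner_eq_norm_add_mul_self_sub_norm_mul_self_sub_norm_mul_self_div_two x y
  have h2 := real_inner_eq_norm_mul_self_add_norm_mul_self_sub_norm_sub_mul_self_div_two x y
  nlinarith [sq_nonneg (‖x+y‖), sq_nonneg (‖x-y‖), sq_abs (‖x‖)]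

lemma frob_parallelogram {p q : ℕ} (A B : Matrix (Fin p) (Fin q) ℝ) :
    frobNorm (A + B) ^ 2 + frobNorm (A - B) ^ 2 = 2 * (frobNorm A ^ 2 + frobNorm B ^ 2) := by
  simp only [frobNorm_sq, ← Finset.sum_add_distrib, Finset.mul_sum]
  congr 1; ext i; congr 1; ext j
  simp [Matrix.add_apply, Matrix.sub_apply]; ring

lemma rip_core
    (n₁ n₂ m r : ℕ)
    (𝒜 : Matrix (Fin n₁) (Fin n₂) ℝ →ₗ[ℝ] EuclideanSpace ℝ (Fin m))
    (δ : ℝ)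
    (hRIP : ∀ X : Matrix (Fin n₁) (Fin n₂) ℝ, X.rank ≤ 2 * r →
      (1 - δ) * frobNorm X ^ 2 ≤ ‖𝒜 X‖ ^ 2 ∧ ‖𝒜 X‖ ^ 2 ≤ (1 + δ) * frobNorm X ^ 2)
    (X Y : Matrix (Fin n₁) (Fin n₂) ℝ) (hX : X.rank ≤ r) (hY : Y.rank ≤ r) :
    |(inner ℝ (𝒜 X) (𝒜 Y) : ℝ) - mip X Y| ≤ δ / 2 * (frobNorm X ^ 2 + frobNorm Y ^ 2) := by
  have hrP : (X + Y).rank ≤ 2 * r :=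
    le_trans (rank_add_le' X Y) (by omega)
  have hrM : (X - Y).rank ≤ 2 * r := by
    rw [sub_eq_add_neg]
    refine le_trans (rank_add_le' X (-Y)) ?_
    rw [rank_neg']; omega
  obtain ⟨hP1, hP2⟩ := hRIP _ hrP
  obtain ⟨hM1, hM2⟩ := hRIP _ hrM
  rw [map_add] at hP1 hP2
  rw [map_sub] at hM1 hM2
  have hpolA := inner_polar (𝒜 X) (𝒜 Y)
  have hpolm := mip_polar X Y
  have hpar := frob_parallelogram X Y
  have hpard : δ * (frobNorm (X + Y) ^ 2 + frobNorm (X - Y) ^ 2)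
      = δ * (2 * (frobNorm X ^ 2 + frobNorm Y ^ 2)) := by rw [hpar]
  rw [abs_le]
  constructor <;> nlinarith [hpard, hpolA, hpolm, hP1, hP2, hM1, hM2]


/-- **Near-isometry of the inner product under the restricted isometry property.**
If a linear operator `𝒜 : ℝ^{n₁×n₂} → ℝᵐ` satisfies the `2r`-RIP with constant `δ_{2r} < 1`,
then for all matrices `X, Y` of rank at most `r`,
`|⟨𝒜(X), 𝒜(Y)⟩ − ⟨X, Y⟩| ≤ δ_{2r} ‖X‖_F ‖Y‖_F`. -/
theorem rip_inner_product_preservation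
    (n₁ n₂ m r : ℕ)
    (𝒜 : Matrix (Fin n₁) (Fin n₂) ℝ →ₗ[ℝ] EuclideanSpace ℝ (Fin m))
    (δ : ℝ) (hδ : δ < 1)
    (hRIP : ∀ X : Matrix (Fin n₁) (Fin n₂) ℝ, X.rank ≤ 2 * r →
      (1 - δ) * frobNorm X ^ 2 ≤ ‖𝒜 X‖ ^ 2 ∧ ‖𝒜 X‖ ^ 2 ≤ (1 + δ) * frobNorm X ^ 2) :
    ∀ X Y : Matrix (Fin n₁) (Fin n₂) ℝ, X.rank ≤ r → Y.rank ≤ r →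
      |(inner ℝ (𝒜 X) (𝒜 Y) : ℝ) - mip X Y| ≤ δ * frobNorm X * frobNorm Y := by
  intro X Y hX hY
  by_cases hX0 : frobNorm X = 0
  · have hXz : X = 0 := frobNorm_eq_zero hX0
    subst hXz
    simp [mip_eq_sum, hX0]
  by_cases hY0 : frobNorm Y = 0
  · have hYz : Y = 0 := frobNorm_eq_zero hY0
    subst hYz
    simp [mip_eq_sum, hY0]
  have ha : 0 < frobNorm X := lt_of_le_of_ne (frobNorm_nonneg X) (Ne.symm hX0)
  have hb : 0 < frobNorm Y := lt_of_le_of_ne (frobNorm_nonneg Y) (Ne.symm hY0)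
  set a := frobNorm X with haa
  set b := frobNorm Y with hbb
  set X' : Matrix (Fin n₁) (Fin n₂) ℝ := a⁻¹ • X with hX'
  set Y' : Matrix (Fin n₁) (Fin n₂) ℝ := b⁻¹ • Y with hY'
  have hfX' : frobNorm X' = 1 := by
    rw [hX', frobNorm_smul, abs_of_pos (inv_pos.mpr ha), ← haa]
    field_simp
  have hfY' : frobNorm Y' = 1 := by
    rw [hY', frobNorm_smul, abs_of_pos (inv_pos.mpr hb), ← hbb]
    field_simp
  have hrX' : X'.rank ≤ r := by
    rw [hX', rank_smul' _ (inv_ne_zero (ne_of_gt ha))]; exact hX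
  have hrY' : Y'.rank ≤ r := by
    rw [hY', rank_smul' _ (inv_ne_zero (ne_of_gt hb))]; exact hY
  have hcore := rip_core n₁ n₂ m r 𝒜 δ hRIP X' Y' hrX' hrY'
  rw [hfX', hfY'] at hcore
  have hcore' : |(inner ℝ (𝒜 X') (𝒜 Y') : ℝ) - mip X' Y'| ≤ δ := by
    calc |(inner ℝ (𝒜 X') (𝒜 Y') : ℝ) - mip X' Y'| ≤ δ / 2 * (1 ^ 2 + 1 ^ 2) := hcore
    _ = δ := by ring
  have hXe : X = a • X' := by
    rw [hX', smul_smul, mul_inv_cancel₀ (ne_of_gt ha), one_smul]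
  have hYe : Y = b • Y' := by
    rw [hY', smul_smul, mul_inv_cancel₀ (ne_of_gt hb), one_smul]
  have h1 : (inner ℝ (𝒜 X') (𝒜 Y') : ℝ) = a⁻¹ * (b⁻¹ * (inner ℝ (𝒜 X) (𝒜 Y) : ℝ)) := by
    rw [hX', hY', 𝒜.map_smul, 𝒜.map_smul, real_inner_smul_left, real_inner_smul_right]
  have h2 : mip X' Y' = a⁻¹ * b⁻¹ * mip X Y := by
    rw [hX', hY', mip_smul_smul]
  have key : (inner ℝ (𝒜 X) (𝒜 Y) : ℝ) - mip X Y
      = a * b * ((inner ℝ (𝒜 X') (𝒜 Y') : ℝ) - mip X' Y') := by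
    rw [h1, h2]
    field_simp
  rw [key, abs_mul, abs_of_pos (mul_pos ha hb)]
  calc a * b * |(inner ℝ (𝒜 X') (𝒜 Y') : ℝ) - mip X' Y'| ≤ a * b * δ := by
        exact mul_le_mul_of_nonneg_left hcore' (le_of_lt (mul_pos ha hb))
  _ = δ * a * b := by ring
end

section
/- Let f : ℝⁿˣʳ → ℝ be twice continuously differentiable with global minimizer X⋆, and let ζ, α, β > 0. Suppose: (a) ‖∇²f(X)‖ ≤ β (as an operator on ℝ^{nr}) for all X in B_ζ(X⋆) = {X : ‖X − X⋆‖_F ≤ ζ}; (b) ∇f(XH) = ∇f(X)·H for every X and every orthonormal H ∈ O^{r×r}; and (c) for every X ∈ B_ζ(X⋆), every Z ∈ ℝⁿˣʳ, and every H_Z minimizing H ↦ ‖ZH − X⋆‖_F over O^{r×r}, vec(Z·H_Z − X⋆)ᵀ · ∇²f(X) · vec(Z·H_Z − X⋆) ≥ α·‖Z·H_Z − X⋆‖_F². Then the gradient descent iterates X_{t+1} = X_t − (1/β)·∇f(X_t) started from any X₀ ∈ B_ζ(X⋆) satisfy dist²(X_t, X⋆) ≤ (1 − α/β)ᵗ ·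 dist²(X₀, X⋆) for all t ≥ 0. -/
set_option maxHeartbeats 1000000


open Matrix

attribute [local instance] Matrix.frobeniusNormedAddCommGroup Matrix.frobeniusNormedSpace

/-- The gradient of `f : ℝ^{n×r} → ℝ` as a matrix: `(∇f(X))_{ij} = Df(X)[E_{ij}]`. -/
noncomputable def gradM {n r : ℕ} (f : Matrix (Fin n) (Fin r) ℝ → ℝ)
    (X : Matrix (Fin n) (Fin r) ℝ) : Matrix (Fin n) (Fin r) ℝ :=
  Matrix.of fun i j => fderiv ℝ f X (Matrix.single i j 1)

/-- `dist(X, X⋆) = min_{H ∈ O^{r×r}} ‖XH − X⋆‖_F` (here `‖·‖` is the Frobenius norm). -/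
noncomputable def distF {n r : ℕ} (U X : Matrix (Fin n) (Fin r) ℝ) : ℝ :=
  sInf ((fun H => ‖U * H - X‖) '' {H : Matrix (Fin r) (Fin r) ℝ | Hᵀ * H = 1})

/- ### Auxiliary 1-dimensional calculus lemmas -/

theorem GD.decr_of_deriv_nonpos {g g' : ℝ → ℝ}
    (hd : ∀ s, HasDerivAt g (g' s) s)
    (hn : ∀ s ∈ Set.Icc (0:ℝ) 1, g' s ≤ 0) :
    ∀ s ∈ Set.Icc (0:ℝ) 1, g s ≤ g 0 := by
  have hcont : Continuous g := continuous_iff_continuousAt.2 fun s => (hd s).continuousAt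
  have hanti : AntitoneOn g (Set.Icc 0 1) :=
    antitoneOn_of_deriv_nonpos (convex_Icc 0 1) hcont.continuousOn
      (fun x hx => ((hd x).differentiableAt).differentiableWithinAt)
      (fun x hx => by
        rw [(hd x).deriv]
        rw [interior_Icc] at hx
        exact hn x (Set.mem_Icc_of_Ioo hx))
  intro s hs
  exact hanti (Set.left_mem_Icc.2 one_pos.le) hs hs.1

theorem GD.core1d {ψ ψ' ψ'' : ℝ → ℝ} {C : ℝ}
    (hd : ∀ s, HasDerivAt ψ (ψ' s) s)
    (hd' : ∀ s, HasDerivAt ψ' (ψ'' s) s)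
    (hC : ∀ s ∈ Set.Icc (0:ℝ) 1, ψ'' s ≤ C) :
    ψ 1 ≤ ψ 0 + ψ' 0 + C/2 := by
  have hu : ∀ s, HasDerivAt (fun s => ψ' s - ψ' 0 - C * s) (ψ'' s - C) s := by
    intro s
    simpa using ((hd' s).sub_const (ψ' 0)).fun_sub ((hasDerivAt_id s).const_mul C)
  have hu_le := GD.decr_of_deriv_nonpos hu (fun s hs => by simp only [sub_nonpos]; exact hC s hs)
  simp only [mul_zero, sub_zero, sub_self] at hu_le
  have hh : ∀ s, HasDerivAt (fun s => ψ s - ψ 0 - s * ψ' 0 - C * s^2 / 2)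
      (ψ' s - ψ' 0 - C * s) s := by
    intro s
    have h1 := (((hd s).sub_const (ψ 0)).sub ((hasDerivAt_id s).mul_const (ψ' 0))).sub
        (((hasDerivAt_pow 2 s).const_mul C).div_const 2)
    refine h1.congr_deriv ?_
    norm_num
    ring
  have hh_le := GD.decr_of_deriv_nonpos hh hu_le
  have := hh_le 1 (Set.right_mem_Icc.2 one_pos.le)
  norm_num at this
  linarith

section TaylorAux

variable {E : Type*} [NormedAddCommGroup E] [NormedSpace ℝ E]

theorem GD.line_d1 (f : E → ℝ) (hf : ContDiff ℝ 2 f) (b v : E) (s : ℝ) :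
    HasDerivAt (fun s : ℝ => f (b + s • v)) (fderiv ℝ f (b + s • v) v) s := by
  have hL : HasDerivAt (fun s : ℝ => b + s • v) v s := by
    simpa using ((hasDerivAt_id s).smul_const v).const_add b
  exact (((hf.differentiable (by norm_num)) (b + s • v)).hasFDerivAt).comp_hasDerivAt s hL

theorem GD.line_d2 (f : E → ℝ) (hf : ContDiff ℝ 2 f) (b v : E) (s : ℝ) :
    HasDerivAt (fun s : ℝ => fderiv ℝ f (b + s • v) v)
      (iteratedFDeriv ℝ 2 f (b + s • v) ![v, v]) s := by
  have hL : HasDerivAt (fun s : ℝ => b + s • v) v s := by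
    simpa using ((hasDerivAt_id s).smul_const v).const_add b
  have hf' : ContDiff ℝ 1 (fderiv ℝ f) := hf.fderiv_right (by norm_num)
  have h2 : HasFDerivAt (fderiv ℝ f) (fderiv ℝ (fderiv ℝ f) (b + s • v)) (b + s • v) :=
    ((hf'.differentiable (by norm_num)) (b + s • v)).hasFDerivAt
  have h3 : HasFDerivAt (fun x => fderiv ℝ f x v)
      ((ContinuousLinearMap.apply ℝ ℝ v).comp (fderiv ℝ (fderiv ℝ f) (b + s • v))) (b + s • v) :=
    (ContinuousLinearMap.apply ℝ ℝ v).hasFDerivAt.comp _ h2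
  have h4 := h3.comp_hasDerivAt s hL
  rw [iteratedFDeriv_two_apply]
  exact h4

/-- Taylor-type upper bound along a segment, with a uniform bound on the second
derivative along the segment. -/
theorem GD.taylor_aux (f : E → ℝ) (hf : ContDiff ℝ 2 f) (b v : E) (C : ℝ)
    (hC : ∀ s ∈ Set.Icc (0:ℝ) 1, iteratedFDeriv ℝ 2 f (b + s • v) ![v, v] ≤ C) :
    f (b + v) ≤ f b + fderiv ℝ f b v + C / 2 := by
  have := GD.core1d (ψ := fun s : ℝ => f (b + s • v))
    (ψ' := fun s => fderiv ℝ f (b + s • v) v)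
    (ψ'' := fun s => iteratedFDeriv ℝ 2 f (b + s • v) ![v, v])
    (GD.line_d1 f hf b v) (GD.line_d2 f hf b v) hC
  simpa using this

end TaylorAux

/- ### Frobenius norm facts -/

theorem GD.normsq {n r : ℕ} (A : Matrix (Fin n) (Fin r) ℝ) :
    ‖A‖^2 = ∑ i, ∑ j, (A i j)^2 := by
  rw [Matrix.frobenius_norm_def]
  rw [← Real.rpow_natCast _ 2, ← Real.rpow_mul (by positivity)]
  norm_num

theorem GD.normexp {n r : ℕ} (A B : Matrix (Fin n) (Fin r) ℝ) (w : ℝ) :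
    ‖A - w • B‖^2 = ‖A‖^2 - 2*w*(∑ i, ∑ j, A i j * B i j) + w^2*‖B‖^2 := by
  rw [GD.normsq, GD.normsq, GD.normsq]
  simp_rw [Finset.mul_sum, ← Finset.sum_sub_distrib, ← Finset.sum_add_distrib]
  refine Finset.sum_congr rfl fun i _ => Finset.sum_congr rfl fun j _ => ?_
  simp only [Matrix.sub_apply, Matrix.smul_apply, smul_eq_mul]
  ring

theorem GD.normsq_trace {n r : ℕ} (A : Matrix (Fin n) (Fin r) ℝ) :
    ‖A‖^2 = Matrix.trace (Aᵀ * A) := by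
  rw [GD.normsq, Matrix.trace]
  rw [Finset.sum_comm]
  refine Finset.sum_congr rfl fun j _ => ?_
  simp [Matrix.mul_apply, Matrix.diag, pow_two]

theorem GD.norm_mul_orth {n r : ℕ} (Z : Matrix (Fin n) (Fin r) ℝ)
    (H : Matrix (Fin r) (Fin r) ℝ) (hH : Hᵀ * H = 1) : ‖Z * H‖ = ‖Z‖ := by
  have h1 : H * Hᵀ = 1 := mul_eq_one_comm.1 hH
  have h2 : ‖Z * H‖^2 = ‖Z‖^2 := by
    rw [GD.normsq_trace, GD.normsq_trace, Matrix.transpose_mul]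
    rw [show Hᵀ * Zᵀ * (Z * H) = Hᵀ * (Zᵀ * Z * H) by
      simp [Matrix.mul_assoc]]
    rw [Matrix.trace_mul_comm, show Zᵀ * Z * H * Hᵀ = Zᵀ * Z * (H * Hᵀ) by
      simp [Matrix.mul_assoc], h1, mul_one]
  nlinarith [norm_nonneg (Z * H), norm_nonneg Z]

/- ### Procrustes minimizers -/

theorem GD.orth_compact (r : ℕ) :
    IsCompact {H : Matrix (Fin r) (Fin r) ℝ | Hᵀ * H = 1} := by
  have hclosed : IsClosed {H : Matrix (Fin r) (Fin r) ℝ | Hᵀ * H = 1} := by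
    have hcont : Continuous fun H : Matrix (Fin r) (Fin r) ℝ => Hᵀ * H :=
      (continuous_id.matrix_transpose).matrix_mul continuous_id
    exact isClosed_singleton.preimage hcont
  have hb : {H : Matrix (Fin r) (Fin r) ℝ | Hᵀ * H = 1} ⊆ Metric.closedBall 0 (r+1) := by
    intro H hH
    simp only [Metric.mem_closedBall, dist_zero_right]
    have h2 : ‖H‖^2 = (r : ℝ) := by
      rw [GD.normsq_trace, hH]
      simp
    nlinarith [norm_nonneg H, Nat.cast_nonneg (α := ℝ) r]
  exact (isCompact_closedBall 0 (r+1)).of_isClosed_subset hclosed hb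

theorem GD.orth_nonempty (r : ℕ) :
    (1 : Matrix (Fin r) (Fin r) ℝ) ∈ {H : Matrix (Fin r) (Fin r) ℝ | Hᵀ * H = 1} := by
  simp [Set.mem_setOf_eq, Matrix.transpose_one]

theorem GD.exists_procrustes {n r : ℕ} (X Xs : Matrix (Fin n) (Fin r) ℝ) :
    ∃ H0 : Matrix (Fin r) (Fin r) ℝ, H0ᵀ * H0 = 1 ∧
      (∀ H : Matrix (Fin r) (Fin r) ℝ, Hᵀ * H = 1 → ‖X * H0 - Xs‖ ≤ ‖X * H - Xs‖) := by
  have hcont : ContinuousOn (fun H : Matrix (Fin r) (Fin r) ℝ => ‖X * H - Xs‖)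
      {H : Matrix (Fin r) (Fin r) ℝ | Hᵀ * H = 1} := by
    apply Continuous.continuousOn
    exact ((continuous_const.matrix_mul continuous_id).sub continuous_const).norm
  obtain ⟨H0, hH0, hmin⟩ := (GD.orth_compact r).exists_isMinOn ⟨1, GD.orth_nonempty r⟩ hcont
  exact ⟨H0, hH0, fun H hH => hmin hH⟩

theorem GD.distF_le {n r : ℕ} (X Xs : Matrix (Fin n) (Fin r) ℝ)
    (H : Matrix (Fin r) (Fin r) ℝ) (hH : Hᵀ * H = 1) :
    distF X Xs ≤ ‖X * H - Xs‖ := by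
  apply csInf_le
  · exact ⟨0, by rintro y ⟨H', -, rfl⟩; exact norm_nonneg _⟩
  · exact Set.mem_image_of_mem _ hH

theorem GD.distF_nonneg {n r : ℕ} (X Xs : Matrix (Fin n) (Fin r) ℝ) :
    0 ≤ distF X Xs := by
  apply le_csInf
  · exact ⟨_, Set.mem_image_of_mem _ (GD.orth_nonempty r)⟩
  · rintro y ⟨H', -, rfl⟩; exact norm_nonneg _

theorem GD.distF_eq {n r : ℕ} (X Xs : Matrix (Fin n) (Fin r) ℝ)
    (H0 : Matrix (Fin r) (Fin r) ℝ) (hH0 : H0ᵀ * H0 = 1)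
    (hmin : ∀ H : Matrix (Fin r) (Fin r) ℝ, Hᵀ * H = 1 → ‖X * H0 - Xs‖ ≤ ‖X * H - Xs‖) :
    distF X Xs = ‖X * H0 - Xs‖ := by
  refine le_antisymm (GD.distF_le X Xs H0 hH0) ?_
  apply le_csInf
  · exact ⟨_, Set.mem_image_of_mem _ (GD.orth_nonempty r)⟩
  · rintro y ⟨H', hH', rfl⟩; exact hmin H' hH'

/- ### gradient as sum -/

theorem GD.fderiv_eq_sum {n r : ℕ} (f : Matrix (Fin n) (Fin r) ℝ → ℝ)
    (Y W : Matrix (Fin n) (Fin r) ℝ) :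
    fderiv ℝ f Y W = ∑ i, ∑ j, W i j * gradM f Y i j := by
  conv_lhs => rw [matrix_eq_sum_single W]
  rw [map_sum]
  refine Finset.sum_congr rfl fun i _ => ?_
  rw [map_sum]
  refine Finset.sum_congr rfl fun j _ => ?_
  have h : Matrix.single i j (W i j) = W i j • Matrix.single i j 1 := by
    ext a b
    simp only [Matrix.single, Matrix.smul_apply, Matrix.of_apply, smul_eq_mul]
    by_cases h1 : i = a ∧ j = b <;> simp_all
  rw [h, ContinuousLinearMap.map_smul]
  simp [gradM]

theorem GD.step {n r : ℕ} (f : Matrix (Fin n) (Fin r) ℝ → ℝ)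
    (Xstar : Matrix (Fin n) (Fin r) ℝ)
    (α β ζ : ℝ) (hα : 0 < α) (hβ : 0 < β)
    (hf : ContDiff ℝ 2 f)
    (hmin : ∀ X, f Xstar ≤ f X)
    (hsmooth : ∀ X : Matrix (Fin n) (Fin r) ℝ, ‖X - Xstar‖ ≤ ζ →
      ‖iteratedFDeriv ℝ 2 f X‖ ≤ β)
    (hgrad0 : gradM f Xstar = 0)
    (Y G : Matrix (Fin n) (Fin r) ℝ)
    (hGY : gradM f Y = G)
    (hζΔ : ‖Y - Xstar‖ ≤ ζ)
    (hscΔ : ∀ W : Matrix (Fin n) (Fin r) ℝ, ‖W - Xstar‖ ≤ ζ →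
      α * ‖Y - Xstar‖^2 ≤ iteratedFDeriv ℝ 2 f W ![Y - Xstar, Y - Xstar]) :
    ‖(Y - Xstar) - (1/β) • G‖^2 ≤ (1 - α/β) * ‖Y - Xstar‖^2 := by
  have hβ' : (0:ℝ) < 1/β := by positivity
  set Δ := Y - Xstar with hΔdef
  have hΔY : Y = Xstar + Δ := by rw [hΔdef]; abel
  set p := fderiv ℝ f Y Δ with hp
  set d2 := ‖Δ‖^2 with hd2def
  set g2 := ‖G‖^2 with hg2def
  have hd2 : 0 ≤ d2 := by rw [hd2def]; positivity
  have hg2 : 0 ≤ g2 := by rw [hg2def]; positivity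
  have hpsum : p = ∑ i, ∑ j, Δ i j * G i j := by
    rw [hp, GD.fderiv_eq_sum, hGY]
  have hgfd : fderiv ℝ f Y G = g2 := by
    rw [GD.fderiv_eq_sum, hGY, hg2def, GD.normsq]
    exact Finset.sum_congr rfl fun i _ => Finset.sum_congr rfl fun j _ => by
      rw [pow_two]
  -- the aligned error stays in the ball along admissible gradient segments
  have hball : ∀ c : ℝ, 0 ≤ c → c * g2 ≤ 2*p → ‖Δ - c • G‖ ≤ ζ := by
    intro c hc hcle
    have h1 : ‖Δ - c • G‖^2 ≤ ‖Δ‖^2 := by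
      rw [GD.normexp, ← hpsum]
      nlinarith [mul_le_mul_of_nonneg_left hcle hc]
    have h2 : ‖Δ‖ ≤ ζ := hζΔ
    nlinarith [norm_nonneg (Δ - c • G), norm_nonneg Δ]
  -- F1 : strong-convexity-type lower bound
  have hF1 : α/2 * d2 + (f Y - f Xstar) ≤ p := by
    have hC : ∀ s ∈ Set.Icc (0:ℝ) 1,
        iteratedFDeriv ℝ 2 (fun x => -f x) (Y + s • (-Δ)) ![-Δ, -Δ] ≤ -(α * d2) := by
      intro s hs
      have hpt : Y + s • (-Δ) = Xstar + (1-s) • Δ := by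
        rw [hΔY]; module
      have hballpt : ‖(Xstar + (1-s) • Δ) - Xstar‖ ≤ ζ := by
        have he : Xstar + (1-s) • Δ - Xstar = (1-s) • Δ := by abel
        rw [he, norm_smul, Real.norm_eq_abs]
        have h1s : |1 - s| ≤ 1 := by
          rw [abs_le]; constructor <;> [linarith [hs.2]; linarith [hs.1]]
        nlinarith [norm_nonneg Δ, hζΔ]
      have hq := hscΔ _ hballpt
      have hneg1 : (![-Δ, -Δ] : Fin 2 → Matrix (Fin n) (Fin r) ℝ)
          = fun i => (-1 : ℝ) • (![Δ, Δ] i) := by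
        funext i; fin_cases i <;> simp
      have hneg : iteratedFDeriv ℝ 2 (fun x => -f x) (Y + s • (-Δ)) ![-Δ, -Δ]
          = -(iteratedFDeriv ℝ 2 f (Xstar + (1-s) • Δ) ![Δ, Δ]) := by
        rw [hpt, hneg1]
        rw [show (fun x => -f x) = -f from rfl, iteratedFDeriv_neg_apply]
        rw [ContinuousMultilinearMap.map_smul_univ]
        simp
      rw [hneg]
      linarith
    have hT := GD.taylor_aux (fun x => -f x) hf.neg Y (-Δ) (-(α * d2)) hC
    have hYΔ : Y + -Δ = Xstar := by rw [hΔY]; abel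
    have hfd : fderiv ℝ (fun x => -f x) Y (-Δ) = p := by
      erw [fderiv_fun_neg]; show -(fderiv ℝ f Y (-Δ)) = _; rw [map_neg, neg_neg]
    rw [hYΔ] at hT
    erw [hfd] at hT
    linarith
  -- F2 : smoothness-type upper bound along the gradient direction
  have hF2 : ∀ w : ℝ, 0 ≤ w → w * g2 ≤ 2*p →
      f Xstar ≤ f Y - w*g2 + w^2*β*g2/2 := by
    intro w hw hwle
    have hC : ∀ s ∈ Set.Icc (0:ℝ) 1,
        iteratedFDeriv ℝ 2 f (Y + s • (-(w • G))) ![-(w • G), -(w • G)] ≤ β*(w^2*g2) := by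
      intro s hs
      have hpt : Y + s • (-(w • G)) = Xstar + (Δ - (s*w) • G) := by
        rw [hΔY]; module
      have hballpt : ‖(Xstar + (Δ - (s*w) • G)) - Xstar‖ ≤ ζ := by
        have he : Xstar + (Δ - (s*w) • G) - Xstar = Δ - (s*w) • G := by abel
        rw [he]
        refine hball (s*w) (mul_nonneg hs.1 hw) ?_
        have : s * w * g2 ≤ w * g2 := by
          nlinarith [mul_nonneg (mul_nonneg (sub_nonneg.2 hs.2) hw) hg2]
        linarith
      have hsm := hsmooth _ (by rw [← hpt] at hballpt; exact hballpt)
      have hle := (iteratedFDeriv ℝ 2 f (Y + s • (-(w • G)))).le_opNorm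
        ![-(w • G), -(w • G)]
      have hnv : ‖-(w • G)‖ = w * ‖G‖ := by
        rw [norm_neg, norm_smul, Real.norm_eq_abs, abs_of_nonneg hw]
      rw [Fin.prod_univ_two] at hle
      simp only [Matrix.cons_val_zero, Matrix.cons_val_one, Matrix.head_cons] at hle
      rw [hnv] at hle
      have hG2 : w * ‖G‖ * (w * ‖G‖) = w^2*g2 := by rw [hg2def]; ring
      rw [hG2] at hle
      calc iteratedFDeriv ℝ 2 f (Y + s • (-(w • G))) ![-(w • G), -(w • G)]
          ≤ ‖iteratedFDeriv ℝ 2 f (Y + s • (-(w • G)))‖ * (w^2*g2) :=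
            le_trans (le_abs_self _) (by rw [← Real.norm_eq_abs]; exact hle)
        _ ≤ β*(w^2*g2) := by
            apply mul_le_mul_of_nonneg_right hsm (by positivity)
    have hT := GD.taylor_aux f hf Y (-(w • G)) (β*(w^2*g2)) hC
    have hfd0 : fderiv ℝ f Y (w • G) = w * g2 := by
      rw [(fderiv ℝ f Y).map_smul, hgfd]
      simp
    have hfd : fderiv ℝ f Y (-(w • G)) = -(w * g2) := by
      rw [map_neg, hfd0]
    erw [hfd] at hT
    have := hmin (Y + -(w • G))
    linarith
  -- main numeric combination
  rw [GD.normexp, ← hpsum, ← hd2def, ← hg2def]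
  have hpge : α/2 * d2 ≤ p := by linarith [hF1, hmin Y]
  by_cases hg0 : g2 = 0
  · have hG0 : G = 0 := by
      rw [hg2def] at hg0
      have := pow_eq_zero_iff (n := 2) (by norm_num) |>.1 hg0
      exact norm_eq_zero.1 this
    have hp0 : p = 0 := by
      rw [hpsum, hG0]
      simp
    have hd20 : d2 = 0 := by nlinarith
    rw [hg0, hp0, hd20]
    norm_num
  · have hg2pos : 0 < g2 := lt_of_le_of_ne hg2 (Ne.symm hg0)
    have hp0 : 0 ≤ p := by nlinarith
    have hadm : (1/β) * g2 ≤ 2*p := by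
      by_contra hlt
      push_neg at hlt
      rcases eq_or_lt_of_le hp0 with hp00 | hppos
      · -- p = 0 forces Δ = 0 and hence G = 0, contradiction
        have hd20 : d2 = 0 := by nlinarith [hF1, hmin Y]
        have hΔ0 : Δ = 0 := by
          rw [hd2def] at hd20
          exact norm_eq_zero.1 (pow_eq_zero_iff (n := 2) (by norm_num) |>.1 hd20)
        have hYX : Y = Xstar := by
          rw [hΔdef] at hΔ0
          exact sub_eq_zero.1 hΔ0
        have hG0 : G = 0 := by rw [← hGY, hYX, hgrad0]
        rw [hg2def, hG0] at hg2pos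
        simp at hg2pos
      · have hw := hF2 (2*p/g2) (by positivity)
          (by rw [div_mul_cancel₀]; exact hg0)
        have h2 : f Y - f Xstar ≤ p := by nlinarith
        have hfr : (2*p/g2)*g2 = 2*p := by field_simp
        have hfr2 : (2*p/g2)^2*β*g2/2 = 2*p^2*β/g2 := by field_simp
        rw [hfr, hfr2] at hw
        have h3 : g2 * p ≤ 2*p^2*β := by
          have h4 := mul_le_mul_of_nonneg_left (show p ≤ 2*p^2*β/g2 by linarith) hg2pos.le
          calc g2 * p ≤ g2 * (2*p^2*β/g2) := h4
            _ = 2*p^2*β := by field_simp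
        have hcon : g2 ≤ 2*p*β := by
          have := (mul_le_mul_iff_of_pos_right hppos).1 (by linarith : g2 * p ≤ (2*p*β) * p)
          linarith
        rw [div_mul_eq_mul_div, lt_div_iff₀ hβ] at hlt
        nlinarith
    have hfinal := hF2 (1/β) hβ'.le hadm
    have hsimp : (1/β)^2*β*g2/2 = (1/β)*g2/2 := by field_simp
    rw [hsimp] at hfinal
    have hkey : α/2 * d2 + (1/β)*g2/2 ≤ p := by linarith [hF1]
    have hη : (1/β) * α = α/β := by field_simp
    nlinarith [hβ'.le]

/-- **Linear convergence of gradient descent modulo rotational ambiguity.**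
Let `f : ℝ^{n×r} → ℝ` be `C²` with global minimizer `X⋆`, `β`-smooth on the Frobenius ball
`B_ζ(X⋆)`, rotation-equivariant (`∇f(XH) = ∇f(X)H` for orthonormal `H`), and satisfying the
rotation-adjusted strong convexity condition
`vec(ZH_Z − X⋆)ᵀ ∇²f(X) vec(ZH_Z − X⋆) ≥ α‖ZH_Z − X⋆‖_F²` on the ball. Then GD with step
size `1/β` started in the ball satisfies `dist²(X_t, X⋆) ≤ (1 − α/β)ᵗ dist²(X₀, X⋆)`. -/
theorem gd_convergence_up_to_rotation
    (n r : ℕ) (f : Matrix (Fin n) (Fin r) ℝ → ℝ)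
    (Xstar : Matrix (Fin n) (Fin r) ℝ)
    (α β ζ : ℝ) (hα : 0 < α) (hβ : 0 < β) (hζ : 0 < ζ)
    (hf : ContDiff ℝ 2 f)
    (hmin : ∀ X, f Xstar ≤ f X)
    (hsmooth : ∀ X : Matrix (Fin n) (Fin r) ℝ, ‖X - Xstar‖ ≤ ζ →
      ‖iteratedFDeriv ℝ 2 f X‖ ≤ β)
    (hequiv : ∀ (X : Matrix (Fin n) (Fin r) ℝ) (H : Matrix (Fin r) (Fin r) ℝ),
      Hᵀ * H = 1 → gradM f (X * H) = gradM f X * H)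
    (hsc : ∀ X : Matrix (Fin n) (Fin r) ℝ, ‖X - Xstar‖ ≤ ζ →
      ∀ (Z : Matrix (Fin n) (Fin r) ℝ) (HZ : Matrix (Fin r) (Fin r) ℝ),
        HZᵀ * HZ = 1 →
        (∀ H' : Matrix (Fin r) (Fin r) ℝ, H'ᵀ * H' = 1 →
          ‖Z * HZ - Xstar‖ ≤ ‖Z * H' - Xstar‖) →
        α * ‖Z * HZ - Xstar‖ ^ 2 ≤
          iteratedFDeriv ℝ 2 f X ![Z * HZ - Xstar, Z * HZ - Xstar])
    (X : ℕ → Matrix (Fin n) (Fin r) ℝ)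
    (hX0 : ‖X 0 - Xstar‖ ≤ ζ)
    (hupd : ∀ t : ℕ, X (t + 1) = X t - (1 / β) • gradM f (X t)) :
    ∀ t : ℕ, distF (X t) Xstar ^ 2 ≤ (1 - α / β) ^ t * distF (X 0) Xstar ^ 2 := by
  -- gradient vanishes at the global minimizer
  have hgrad0 : gradM f Xstar = 0 := by
    have hloc : IsLocalMin f Xstar := Filter.Eventually.of_forall fun x => hmin x
    have h0 := hloc.fderiv_eq_zero
    ext i j
    simp [gradM]
    erw [h0]
    rfl
  by_cases htriv : n = 0 ∨ r = 0
  · -- degenerate case: the matrix space contains only `0`-norm differences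
    have hdist0 : ∀ U : Matrix (Fin n) (Fin r) ℝ, distF U Xstar = 0 := by
      intro U
      have hnm : ‖U * (1 : Matrix (Fin r) (Fin r) ℝ) - Xstar‖ = 0 := by
        have h2 : ‖U * (1 : Matrix (Fin r) (Fin r) ℝ) - Xstar‖^2 = 0 := by
          rw [GD.normsq]
          rcases htriv with h | h
          · subst h; simp
          · subst h; simp
        have := pow_eq_zero_iff (n := 2) (by norm_num) |>.1 h2
        exact this
      refine le_antisymm ?_ (GD.distF_nonneg _ _)
      calc distF U Xstar ≤ ‖U * (1 : Matrix (Fin r) (Fin r) ℝ) - Xstar‖ := GD.distF_le _ _ 1 (by simp)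
        _ = 0 := hnm
    intro t
    rw [hdist0 (X t), hdist0 (X 0)]
    norm_num
  · push_neg at htriv
    obtain ⟨hn, hr⟩ := htriv
    -- a matrix whose rotations all differ from Xstar, to witness α ≤ β
    have hαβ : α ≤ β := by
      set i0 : Fin n := ⟨0, Nat.pos_of_ne_zero hn⟩
      set j0 : Fin r := ⟨0, Nat.pos_of_ne_zero hr⟩
      set c : ℝ := ‖Xstar‖ + 1 with hc
      set Z0 := Matrix.single i0 j0 c with hZ0def
      have hZ0 : ‖Z0‖^2 = c^2 := by
        rw [GD.normsq]
        have hentry : ∀ i j, (Z0 i j)^2 = if i = i0 ∧ j = j0 then c^2 else 0 := by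
          intro i j
          simp only [hZ0def, Matrix.single, Matrix.of_apply]
          by_cases h1 : i0 = i ∧ j0 = j
          · obtain ⟨ha, hb⟩ := h1
            rw [if_pos ⟨ha, hb⟩, if_pos ⟨ha.symm, hb.symm⟩]
          · rw [if_neg h1, if_neg (by tauto)]
            simp
        calc ∑ i, ∑ j, (Z0 i j)^2
            = ∑ i, ∑ j, (if i = i0 ∧ j = j0 then c^2 else 0) :=
              Finset.sum_congr rfl fun i _ => Finset.sum_congr rfl fun j _ => hentry i j
          _ = c^2 := by simp [ite_and, Finset.sum_ite_eq']
      obtain ⟨H0, hH0, hH0min⟩ := GD.exists_procrustes Z0 Xstar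
      have hnorm0 : ‖Z0 * H0‖ = ‖Z0‖ := GD.norm_mul_orth Z0 H0 hH0
      have hΔ0pos : 0 < ‖Z0 * H0 - Xstar‖ := by
        rcases eq_or_lt_of_le (norm_nonneg (Z0 * H0 - Xstar)) with h | h
        · exfalso
          have h1 : Z0 * H0 - Xstar = 0 := norm_eq_zero.1 h.symm
          have h2 : Z0 * H0 = Xstar := sub_eq_zero.1 h1
          rw [h2] at hnorm0
          have hx : ‖Xstar‖^2 = c^2 := by rw [hnorm0, hZ0]
          rw [hc] at hx
          nlinarith [norm_nonneg Xstar]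
        · exact h
      have h1 := hsc Xstar (by rw [sub_self, norm_zero]; exact hζ.le) Z0 H0 hH0 hH0min
      have h2 := (iteratedFDeriv ℝ 2 f Xstar).le_opNorm
        ![Z0 * H0 - Xstar, Z0 * H0 - Xstar]
      rw [Fin.prod_univ_two] at h2
      simp only [Matrix.cons_val_zero, Matrix.cons_val_one, Matrix.head_cons] at h2
      have h3 := hsmooth Xstar (by rw [sub_self, norm_zero]; exact hζ.le)
      have h4 : iteratedFDeriv ℝ 2 f Xstar ![Z0 * H0 - Xstar, Z0 * H0 - Xstar]
          ≤ β * (‖Z0 * H0 - Xstar‖ * ‖Z0 * H0 - Xstar‖) := by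
        calc iteratedFDeriv ℝ 2 f Xstar ![Z0 * H0 - Xstar, Z0 * H0 - Xstar]
            ≤ ‖iteratedFDeriv ℝ 2 f Xstar‖ * (‖Z0 * H0 - Xstar‖ * ‖Z0 * H0 - Xstar‖) :=
              le_trans (le_abs_self _) (by rw [← Real.norm_eq_abs]; exact h2)
          _ ≤ β * (‖Z0 * H0 - Xstar‖ * ‖Z0 * H0 - Xstar‖) :=
              mul_le_mul_of_nonneg_right h3 (by positivity)
      have hsq : ‖Z0 * H0 - Xstar‖^2 = ‖Z0 * H0 - Xstar‖ * ‖Z0 * H0 - Xstar‖ :=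
        pow_two _
      nlinarith [h1, h4, hΔ0pos, hsq, mul_pos hΔ0pos hΔ0pos]
    have ha0 : 0 ≤ 1 - α/β := by
      rw [sub_nonneg]
      exact (div_le_one hβ).2 hαβ
    have ha1 : 0 < α/β := div_pos hα hβ
    have main : ∀ t, distF (X t) Xstar ^2 ≤ (1-α/β)^t * distF (X 0) Xstar^2 ∧
        distF (X t) Xstar ≤ ζ := by
      intro t
      induction t with
      | zero =>
        refine ⟨by norm_num, ?_⟩
        calc distF (X 0) Xstar ≤ ‖X 0 * (1 : Matrix (Fin r) (Fin r) ℝ) - Xstar‖ := GD.distF_le _ _ 1 (by simp)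
          _ ≤ ζ := by rw [Matrix.mul_one]; exact hX0
      | succ t ih =>
        obtain ⟨H0, hH0, hH0m⟩ := GD.exists_procrustes (X t) Xstar
        have hdeq : distF (X t) Xstar = ‖X t * H0 - Xstar‖ := GD.distF_eq _ _ H0 hH0 hH0m
        have hζt : ‖X t * H0 - Xstar‖ ≤ ζ := hdeq ▸ ih.2
        have hGY : gradM f (X t * H0) = gradM f (X t) * H0 := hequiv _ _ hH0
        have hscΔ : ∀ W : Matrix (Fin n) (Fin r) ℝ, ‖W - Xstar‖ ≤ ζ →
            α * ‖X t * H0 - Xstar‖^2 ≤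
              iteratedFDeriv ℝ 2 f W ![X t * H0 - Xstar, X t * H0 - Xstar] :=
          fun W hW => hsc W hW (X t) H0 hH0 hH0m
        have hstep := GD.step f Xstar α β ζ hα hβ hf hmin hsmooth hgrad0
          (X t * H0) (gradM f (X t) * H0) hGY hζt hscΔ
        have hre : (X t * H0 - Xstar) - (1/β) • (gradM f (X t) * H0)
            = X (t+1) * H0 - Xstar := by
          rw [hupd t, Matrix.sub_mul, Matrix.smul_mul]
          abel
        rw [hre] at hstep
        have hd1 : distF (X (t+1)) Xstar ≤ ‖X (t+1) * H0 - Xstar‖ := GD.distF_le _ _ H0 hH0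
        have hd1sq : distF (X (t+1)) Xstar^2 ≤ ‖X (t+1) * H0 - Xstar‖^2 :=
          pow_le_pow_left₀ (GD.distF_nonneg _ _) hd1 2
        have hmainstep : distF (X (t+1)) Xstar^2 ≤ (1-α/β) * distF (X t) Xstar^2 := by
          rw [hdeq]
          exact le_trans hd1sq hstep
        refine ⟨?_, ?_⟩
        · calc distF (X (t+1)) Xstar^2 ≤ (1-α/β) * distF (X t) Xstar^2 := hmainstep
            _ ≤ (1-α/β) * ((1-α/β)^t * distF (X 0) Xstar^2) :=
                mul_le_mul_of_nonneg_left ih.1 ha0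
            _ = (1-α/β)^(t+1) * distF (X 0) Xstar^2 := by ring
        · have h6 : distF (X (t+1)) Xstar^2 ≤ ζ^2 := by
            have h5 : distF (X t) Xstar^2 ≤ ζ^2 :=
              pow_le_pow_left₀ (GD.distF_nonneg _ _) ih.2 2
            nlinarith [GD.distF_nonneg (X t) Xstar]
          nlinarith [GD.distF_nonneg (X (t+1)) Xstar, hζ]
    exact fun t => (main t).1
end
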